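/- Let S ⊆ ℕ and let p ≥ 2. Then the family of sets {(L_i^{p^r})^{-1}(S) : r ∈ ℕ, 0 ≤ i < p^r} is finite if and only if S is p-automatic, where L_i^{k}(n) = kn + i and (L_i^k)^{-1}(S) = {n ∈ ℕ : kn + i ∈ S}. -/

import Mathlib

/-- A (deterministic, complete) finite automaton over the digit alphabet `{0,...,p-1}`,
with states `Fin n`. -/
structure NatAutomaton (p : ℕ) where
  n : ℕ
  start : Fin n
  accept : Fin n → Bool
  step : Fin n → Fin p → Fin n

/-- The state reached after reading a word (list of digits, most significant first). -/
def NatAutomaton.eval {p : ℕ} (M : NatAutomaton p) (w : List (Fin p)) : Fin M.n :=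
  w.foldl M.step M.start

/-- The automaton accepts a word. -/
def NatAutomaton.Accepts {p : ℕ} (M : NatAutomaton p) (w : List (Fin p)) : Prop :=
  M.accept (M.eval w) = true

/-- The value `[w]_p` of a word of base-`p` digits, read most significant digit first. -/
def wordVal (p : ℕ) (w : List (Fin p)) : ℕ :=
  w.foldl (fun acc t => acc * p + t.val) 0

/-- A set `S ⊆ ℕ` is `p`-automatic if some finite automaton accepts exactly the words
`w` (base-`p` digit strings, most significant first) with `[w]_p ∈ S`. -/
def IsPAutomatic (p : ℕ) (S : Set ℕ) : Prop :=
  ∃ M : NatAutomaton p, ∀ w : List (Fin p), M.Accepts w ↔ wordVal p w ∈ S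

/-- The `p`-kernel of a set `S ⊆ ℕ`: the family of sets `(L_i^{p^r})⁻¹(S) = {n : p^r n + i ∈ S}`
for `r ∈ ℕ` and `0 ≤ i < p^r`. -/
def pKernel (p : ℕ) (S : Set ℕ) : Set (Set ℕ) :=
  {T : Set ℕ | ∃ r i : ℕ, i < p ^ r ∧ T = {n : ℕ | p ^ r * n + i ∈ S}}

lemma wordVal_foldl (p : ℕ) (w : List (Fin p)) (a : ℕ) :
    w.foldl (fun acc t => acc * p + t.val) a = a * p ^ w.length + wordVal p w := by
  induction w generalizing a with
  | nil => simp [wordVal]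
  | cons t w ih =>
      simp only [List.foldl_cons, List.length_cons, wordVal]
      rw [ih, ih ((0 : ℕ) * p + t.val)]
      ring

lemma wordVal_append (p : ℕ) (w u : List (Fin p)) :
    wordVal p (w ++ u) = wordVal p w * p ^ u.length + wordVal p u := by
  unfold wordVal
  rw [List.foldl_append, wordVal_foldl]
  rfl

lemma exists_word_of_lt (p : ℕ) (hp : 2 ≤ p) :
    ∀ r i : ℕ, i < p ^ r → ∃ u : List (Fin p), u.length = r ∧ wordVal p u = i := by
  intro r
  induction r with
  | zero =>
      intro i hi
      exact ⟨[], rfl, by simp at hi; simp [wordVal, hi]⟩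
  | succ r ih =>
      intro i hi
      have hppos : 0 < p := by omega
      have hdiv : i / p < p ^ r :=
        Nat.div_lt_of_lt_mul (by rw [← pow_succ']; exact hi)
      obtain ⟨u, hlen, hval⟩ := ih (i / p) hdiv
      refine ⟨u ++ [⟨i % p, Nat.mod_lt _ hppos⟩], by simp [hlen], ?_⟩
      have hsing : wordVal p [(⟨i % p, Nat.mod_lt _ hppos⟩ : Fin p)] = i % p := by
        simp [wordVal]
      rw [wordVal_append, hval, hsing]
      simp only [List.length_singleton, pow_one]
      exact Nat.div_add_mod' i p

lemma exists_word_val (p : ℕ) (hp : 2 ≤ p) (m : ℕ) :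
    ∃ w : List (Fin p), wordVal p w = m := by
  obtain ⟨u, _, hv⟩ := exists_word_of_lt p hp m m (Nat.lt_pow_self (by omega : 1 < p))
  exact ⟨u, hv⟩

lemma self_mem_pKernel (p : ℕ) (S : Set ℕ) : S ∈ pKernel p S :=
  ⟨0, 0, by simp, by ext n; simp⟩

lemma step_mem_pKernel (p : ℕ) (S : Set ℕ) (d : Fin p) {T : Set ℕ}
    (hT : T ∈ pKernel p S) : {n : ℕ | p * n + d.val ∈ T} ∈ pKernel p S := by
  obtain ⟨r, i, hi, rfl⟩ := hT
  refine ⟨r + 1, p ^ r * d.val + i, ?_, ?_⟩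
  · have hd : d.val + 1 ≤ p := d.isLt
    have h1 : p ^ r * (d.val + 1) ≤ p ^ r * p := Nat.mul_le_mul_left _ hd
    rw [pow_succ]
    nlinarith [pow_pos (show 0 < p by omega) r]
  · ext n
    simp only [Set.mem_setOf_eq]
    rw [show p ^ (r + 1) * n + (p ^ r * d.val + i) = p ^ r * (p * n + d.val) + i by ring]

/-- A set `S ⊆ ℕ` is `p`-automatic if and only if its `p`-kernel
`{(L_i^{p^r})⁻¹(S) : r ∈ ℕ, 0 ≤ i < p^r}` is finite. -/
theorem isPAutomatic_iff_pKernel_finite (p : ℕ) (hp : 2 ≤ p) (S : Set ℕ) :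
    (pKernel p S).Finite ↔ IsPAutomatic p S := by
  classical
  constructor
  · -- kernel finite → automatic
    intro hK
    haveI : Fintype ↥(pKernel p S) := hK.fintype
    set Q := (↥(pKernel p S) → Bool) with hQ
    let e : Q ≃ Fin (Fintype.card Q) := Fintype.equivFin Q
    -- the "profile" state of a number a
    let fA : ℕ → Q := fun a T => decide (a ∈ (T : Set ℕ))
    let stepF : Q → Fin p → Q := fun f d T =>
      f ⟨{n : ℕ | p * n + d.val ∈ (T : Set ℕ)}, step_mem_pKernel p S d T.2⟩
    let step' : Fin (Fintype.card Q) → Fin p → Fin (Fintype.card Q) :=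
      fun q d => e (stepF (e.symm q) d)
    let M : NatAutomaton p :=
      { n := Fintype.card Q
        start := e (fA 0)
        accept := fun q => (e.symm q) ⟨S, self_mem_pKernel p S⟩
        step := step' }
    have key : ∀ (w : List (Fin p)) (a : ℕ),
        w.foldl step' (e (fA a)) = e (fA (w.foldl (fun acc t => acc * p + t.val) a)) := by
      intro w
      induction w with
      | nil => intro a; rfl
      | cons t w ih =>
          intro a
          simp only [List.foldl_cons]
          have hstep : step' (e (fA a)) t = e (fA (a * p + t.val)) := by
            show e (stepF (e.symm (e (fA a))) t) = _
            rw [e.symm_apply_apply]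
            congr 1
            funext T
            simp only [stepF, fA, Set.mem_setOf_eq, mul_comm]
          rw [hstep, ih]
    refine ⟨M, fun w => ?_⟩
    have heval : M.eval w = e (fA (wordVal p w)) := key w 0
    show M.accept (M.eval w) = true ↔ _
    rw [heval]
    show (e.symm (e (fA (wordVal p w)))) ⟨S, self_mem_pKernel p S⟩ = true ↔ _
    rw [e.symm_apply_apply]
    simp [fA]
  · -- automatic → kernel finite
    rintro ⟨M, hM⟩
    let canon : ℕ → List (Fin p) := fun m => (exists_word_val p hp m).choose
    have hcanon : ∀ m, wordVal p (canon m) = m := fun m => (exists_word_val p hp m).choose_spec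
    let F : (Fin M.n → Bool) → Set ℕ := fun g => {m : ℕ | g (M.eval (canon m)) = true}
    have hsub : pKernel p S ⊆ Set.range F := by
      rintro T ⟨r, i, hi, rfl⟩
      obtain ⟨u, hlen, hval⟩ := exists_word_of_lt p hp r i hi
      refine ⟨fun q => M.accept (u.foldl M.step q), ?_⟩
      ext m
      simp only [F, Set.mem_setOf_eq]
      have h1 : u.foldl M.step (M.eval (canon m)) = M.eval (canon m ++ u) := by
        simp [NatAutomaton.eval, List.foldl_append]
      rw [h1]
      have := hM (canon m ++ u)
      rw [NatAutomaton.Accepts] at this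
      rw [this, wordVal_append, hcanon, hlen, hval, mul_comm]
    exact (Set.finite_range F).subset hsub
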